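/- Let 𝒲̂_0 = ∑_{k≥1} k t_k 𝓛̂_k with 𝓛̂_k the β-deformed Virasoro operators, and 𝓕̂_1 = 𝓛̂_{-1} = ∑_{k≥1} k t_k ∂/∂t_{k-1}. Then [½𝒲̂_0, 𝓕̂_1] = ∑_{k≥1} k t_k 𝓛̂_{k-1} as operators on ℝ[t_0, t_1, ...]. -/

import Mathlib

open MvPolynomial

abbrev MP := MvPolynomial ℕ ℝ

lemma pd_ite (i : ℕ) (c : Prop) [Decidable c] :
    pderiv i (if c then (1:MP) else 0) = 0 := by split <;> simp

lemma pd_comm (i j : ℕ) (P : MP) : pderiv i (pderiv j P) = pderiv j (pderiv i P) := by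
  induction P using MvPolynomial.induction_on with
  | C a => simp
  | add p q hp hq => simp [hp, hq]
  | mul_X p n hp =>
    simp only [pderiv_mul, map_add, pderiv_X, hp, Pi.single_apply, pd_ite,
      mul_zero, zero_mul, add_zero, zero_add, mul_one]
    ring

lemma pd_X_mul (i k : ℕ) (Q : MP) :
    pderiv i (X k * Q) = (if i = k then Q else 0) + X k * pderiv i Q := by
  rw [pderiv_mul, pderiv_X, Pi.single_apply]
  by_cases h : i = k
  · subst h; simp
  · rw [if_neg h, if_neg (fun hh => h hh.symm), zero_mul, zero_add]

/-- `P` has no variables `≥ N`. -/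
def Bnd (N : ℕ) (P : MP) : Prop := ∀ i, N ≤ i → pderiv i P = 0

lemma bnd_exists (P : MP) : ∃ N, Bnd N P := by
  refine ⟨P.vars.sup id + 1, fun i hi => pderiv_eq_zero_of_notMem_vars fun hv => ?_⟩
  have := Finset.le_sup (f := id) hv
  simp only [id] at this
  omega

lemma bnd_mono {N M : ℕ} (h : N ≤ M) {P : MP} (hP : Bnd N P) : Bnd M P :=
  fun i hi => hP i (le_trans h hi)

lemma bnd_pd {N : ℕ} {P : MP} (hP : Bnd N P) (j : ℕ) : Bnd N (pderiv j P) :=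
  fun i hi => by rw [pd_comm, hP i hi, map_zero]

lemma bnd_zero (N : ℕ) : Bnd N (0 : MP) := fun i _ => by simp

lemma bnd_add {N : ℕ} {P Q : MP} (hP : Bnd N P) (hQ : Bnd N Q) : Bnd N (P + Q) :=
  fun i hi => by rw [map_add, hP i hi, hQ i hi, add_zero]

lemma bnd_smul {N : ℕ} {P : MP} (hP : Bnd N P) (c : ℝ) : Bnd N (c • P) :=
  fun i hi => by rw [(pderiv i).map_smul, hP i hi, smul_zero]

lemma bnd_X_mul {N M k : ℕ} {Q : MP} (hQ : Bnd N Q) (hN : N ≤ M) (hk : k < M) :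
    Bnd M (X k * Q) := by
  intro i hi
  rw [pd_X_mul, hQ i (le_trans hN hi), mul_zero, if_neg (by omega), add_zero]

lemma bnd_sum {N : ℕ} {ι : Type*} (t : Finset ι) (g : ι → MP) (h : ∀ i ∈ t, Bnd N (g i)) :
    Bnd N (∑ i ∈ t, g i) := by
  classical
  induction t using Finset.induction with
  | empty => simpa using bnd_zero N
  | insert _ _ hx ih =>
    rw [Finset.sum_insert hx]
    exact bnd_add (h _ (Finset.mem_insert_self _ _))
      (ih fun i hi => h i (Finset.mem_insert_of_mem hi))

lemma finsum_eq_range {f : ℕ → MP} {N : ℕ} (h : ∀ k, N ≤ k → f k = 0) :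
    ∑ᶠ k, f k = ∑ k ∈ Finset.range N, f k := by
  apply finsum_eq_sum_of_support_subset
  intro x hx
  simp only [Function.mem_support] at hx
  simp only [Finset.coe_range, Set.mem_Iio]
  by_contra hc; exact hx (h x (by omega))

/-- The β-deformed Virasoro operator `𝓛̂_n` acting on polynomials in `t_0, t_1, ...`
(for `n ≥ -1`; for `n = -1` the second sum is empty and the third term vanishes). -/
noncomputable def Lbeta (β : ℝ) (n : ℤ) (P : MvPolynomial ℕ ℝ) : MvPolynomial ℕ ℝ :=
  (∑ᶠ k : ℕ, if 1 ≤ k then (k : ℝ) • (X k * pderiv (((k : ℤ) + n).toNat) P) else 0) +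
    β • ∑ k ∈ Finset.range ((n + 1).toNat), pderiv k (pderiv (n.toNat - k) P) +
    ((1 - β) * ((n : ℝ) + 1)) • pderiv n.toNat P

/-- `𝒲̂_0 = ∑_{k≥1} k t_k 𝓛̂_k`. -/
noncomputable def Wbeta0 (β : ℝ) (P : MvPolynomial ℕ ℝ) : MvPolynomial ℕ ℝ :=
  ∑ᶠ k : ℕ, if 1 ≤ k then (k : ℝ) • (X k * Lbeta β k P) else 0

/-- `An s P = ∑_k k t_k ∂_{k+s-1} P`, the first sum of `𝓛̂_{s-1}`. -/
noncomputable def An (s : ℕ) (P : MP) : MP := ∑ᶠ k : ℕ, (k:ℝ) • (X k * pderiv (k + s - 1) P)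

lemma an_term_zero {N : ℕ} {P : MP} (hP : Bnd N P) (s : ℕ) :
    ∀ k, N + 1 ≤ k → (k:ℝ) • (X k * pderiv (k + s - 1) P) = 0 := by
  intro k hk
  rw [hP (k+s-1) (by omega), mul_zero, smul_zero]

lemma an_eq_range {N : ℕ} {P : MP} (hP : Bnd N P) (s : ℕ) {M : ℕ} (hM : N + 1 ≤ M) :
    An s P = ∑ k ∈ Finset.range M, (k:ℝ) • (X k * pderiv (k + s - 1) P) :=
  finsum_eq_range (fun k hk => an_term_zero hP s k (by omega))

lemma bnd_an {N : ℕ} {P : MP} (hP : Bnd N P) (s : ℕ) : Bnd (N+1) (An s P) := by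
  rw [an_eq_range hP s (le_refl (N+1))]
  exact bnd_sum _ _ (fun k hk =>
    bnd_smul (bnd_X_mul (bnd_pd hP _) (by omega) (Finset.mem_range.mp hk)) _)

lemma an_zero_of_le {N : ℕ} {P : MP} (hP : Bnd N P) {s : ℕ} (hs : N ≤ s) : An s P = 0 := by
  rw [an_eq_range hP s (le_refl (N+1))]
  apply Finset.sum_eq_zero
  intro k _
  rcases Nat.eq_zero_or_pos k with rfl | h
  · simp
  · rw [hP (k+s-1) (by omega), mul_zero, smul_zero]

lemma an_map_zero (s : ℕ) : An s 0 = 0 := by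
  rw [An, finsum_eq_range (N := 0) (f := fun k => (k:ℝ) • (X k * pderiv (k+s-1) (0:MP)))
    (by simp)]
  simp

lemma an_add (s : ℕ) (P Q : MP) : An s (P + Q) = An s P + An s Q := by
  obtain ⟨N, hP⟩ := bnd_exists P
  obtain ⟨M, hQ⟩ := bnd_exists Q
  have hP' : Bnd (max N M) P := bnd_mono (le_max_left _ _) hP
  have hQ' : Bnd (max N M) Q := bnd_mono (le_max_right _ _) hQ
  rw [an_eq_range (bnd_add hP' hQ') s (le_refl _), an_eq_range hP' s (le_refl _),
    an_eq_range hQ' s (le_refl _), ← Finset.sum_add_distrib]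
  exact Finset.sum_congr rfl fun k _ => by rw [map_add, mul_add, smul_add]

lemma an_smul (s : ℕ) (c : ℝ) (P : MP) : An s (c • P) = c • An s P := by
  obtain ⟨N, hP⟩ := bnd_exists P
  rw [an_eq_range (bnd_smul hP c) s (le_refl _), an_eq_range hP s (le_refl _),
    Finset.smul_sum]
  exact Finset.sum_congr rfl fun k _ => by
    rw [(pderiv _).map_smul, mul_smul_comm, smul_comm]

noncomputable def AnL (s : ℕ) : MP →ₗ[ℝ] MP where
  toFun := An s
  map_add' := an_add s
  map_smul' := an_smul s

@[simp] lemma anL_apply (s : ℕ) (P : MP) : AnL s P = An s P := rfl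

lemma Lbeta_int_ge (β : ℝ) {n : ℤ} (hn : -1 ≤ n) (P : MP) :
    Lbeta β n P = An ((n+1).toNat) P
      + β • ∑ k ∈ Finset.range ((n + 1).toNat), pderiv k (pderiv (n.toNat - k) P)
      + ((1 - β) * ((n : ℝ) + 1)) • pderiv n.toNat P := by
  rw [Lbeta]
  congr 2
  rw [An]
  apply finsum_congr
  intro k
  have h : ((k:ℤ) + n).toNat = k + (n+1).toNat - 1 := by omega
  rw [h]
  rcases Nat.eq_zero_or_pos k with rfl | hk
  · simp
  · rw [if_pos (by omega : 1 ≤ k)]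

lemma Lbeta_neg_one (β : ℝ) (P : MP) : Lbeta β (-1) P = An 0 P := by
  rw [Lbeta_int_ge β (by norm_num) P]
  norm_num

lemma Lbeta_nat (β : ℝ) (m : ℕ) (P : MP) :
    Lbeta β m P = An (m+1) P + β • ∑ k ∈ Finset.range (m+1), pderiv k (pderiv (m - k) P)
      + ((1-β)*((m:ℝ)+1)) • pderiv m P := by
  rw [Lbeta_int_ge β (by omega) P]
  have h1 : ((m:ℤ)+1).toNat = m + 1 := by omega
  have h2 : ((m:ℤ)).toNat = m := by omega
  rw [h1, h2]
  norm_num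

lemma Lbeta_sub_one (β : ℝ) {m : ℕ} (hm : 1 ≤ m) (P : MP) :
    Lbeta β ((m:ℤ) - 1) P = An m P
      + β • ∑ k ∈ Finset.range m, pderiv k (pderiv (m - 1 - k) P)
      + ((1-β)*(m:ℝ)) • pderiv (m-1) P := by
  rw [Lbeta_int_ge β (by omega) P]
  have h1 : ((m:ℤ) - 1 + 1).toNat = m := by omega
  have h2 : ((m:ℤ) - 1).toNat = m - 1 := by omega
  rw [h1, h2]
  have h3 : (((m:ℤ) - 1 : ℤ) : ℝ) + 1 = (m:ℝ) := by push_cast; ring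
  rw [h3]

lemma Lbeta_zero {N : ℕ} {P : MP} (hP : Bnd N P) {k : ℕ} (hk : 2*N ≤ k) (β : ℝ) :
    Lbeta β k P = 0 := by
  rw [Lbeta_nat]
  rw [an_zero_of_le hP (by omega)]
  rw [Finset.sum_eq_zero (fun a ha => ?_), hP k (by omega)]
  · simp
  · have ha' : a ≤ k := by have := Finset.mem_range.mp ha; omega
    by_cases h : N ≤ k - a
    · rw [hP _ h, map_zero]
    · rw [pd_comm, hP a (by omega), map_zero]

lemma bnd_Lbeta_nat {N : ℕ} {P : MP} (hP : Bnd N P) (β : ℝ) (m : ℕ) :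
    Bnd (N+1) (Lbeta β m P) := by
  rw [Lbeta_nat]
  exact bnd_add (bnd_add (bnd_an hP _)
    (bnd_smul (bnd_sum _ _ fun a _ => bnd_mono (by omega) (bnd_pd (bnd_pd hP _) _)) _))
    (bnd_smul (bnd_mono (by omega) (bnd_pd hP _)) _)

lemma F_X_mul (k : ℕ) (Q : MP) :
    An 0 (X k * Q) = ((k:ℝ)+1) • (X (k+1) * Q) + X k * An 0 Q := by
  obtain ⟨N, hQ⟩ := bnd_exists Q
  set M := max (N+1) (k+2) with hMdef
  have hXQ : Bnd (max N (k+1)) (X k * Q) :=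
    bnd_X_mul hQ (le_max_left _ _) (by omega)
  rw [an_eq_range hXQ 0 (M := M) (by omega), an_eq_range hQ 0 (M := M) (by omega)]
  have key : ∀ j : ℕ, (j:ℝ) • (X j * pderiv (j+0-1) (X k * Q)) =
      (if j = k+1 then ((k:ℝ)+1) • (X (k+1) * Q) else 0)
        + (j:ℝ) • (X j * (X k * pderiv (j+0-1) Q)) := by
    intro j
    rw [pd_X_mul]
    by_cases hj : j = k + 1
    · subst hj
      rw [if_pos rfl, if_pos (show k+1+0-1 = k by omega)]
      rw [mul_add, smul_add]
      congr 1
      have : ((k+1:ℕ):ℝ) = (k:ℝ)+1 := by push_cast; ring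
      rw [this]
    · rw [if_neg hj]
      rcases Nat.eq_zero_or_pos j with rfl | hj1
      · simp
      · rw [if_neg (by omega), zero_add, zero_add]
  rw [Finset.sum_congr rfl (fun j _ => key j), Finset.sum_add_distrib]
  congr 1
  · rw [Finset.sum_ite_eq' (Finset.range M) (k+1) (fun _ => ((k:ℝ)+1) • (X (k+1) * Q))]
    rw [if_pos (Finset.mem_range.mpr (by omega))]
  · rw [Finset.mul_sum]
    exact Finset.sum_congr rfl fun j _ => by
      rw [mul_smul_comm, mul_left_comm]

lemma pd_F (i : ℕ) (Q : MP) :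
    pderiv i (An 0 Q) = An 0 (pderiv i Q) + (i:ℝ) • pderiv (i-1) Q := by
  obtain ⟨N, hQ⟩ := bnd_exists Q
  set M := max (N+1) (i+1) with hMdef
  rw [an_eq_range hQ 0 (M := M) (by omega), map_sum,
    an_eq_range (bnd_pd hQ i) 0 (M := M) (by omega)]
  have key : ∀ j : ℕ, pderiv i ((j:ℝ) • (X j * pderiv (j+0-1) Q)) =
      (if j = i then (i:ℝ) • pderiv (i-1) Q else 0)
        + (j:ℝ) • (X j * pderiv (j+0-1) (pderiv i Q)) := by
    intro j
    rw [(pderiv i).map_smul, pd_X_mul, pd_comm, smul_add]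
    by_cases hj : i = j
    · subst hj
      rw [if_pos rfl, if_pos rfl]
      have h : i + 0 - 1 = i - 1 := by omega
      rw [h]
    · rw [if_neg hj, if_neg (fun h => hj h.symm), smul_zero, zero_add]
  rw [Finset.sum_congr rfl (fun j _ => key j), Finset.sum_add_distrib]
  rw [Finset.sum_ite_eq' (Finset.range M) i (fun _ => (i:ℝ) • pderiv (i-1) Q)]
  rw [if_pos (Finset.mem_range.mpr (by omega)), add_comm]

lemma finsum_shift {v v' : ℕ → MP} {N : ℕ} (hv : ∀ k, N ≤ k → v k = 0)
    (h0 : v' 0 = 0) (hs : ∀ k, v' (k+1) = v k) : ∑ᶠ k, v' k = ∑ᶠ k, v k := by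
  have hv' : ∀ k, N+1 ≤ k → v' k = 0 := by
    intro k hk
    obtain ⟨j, rfl⟩ : ∃ j, k = j + 1 := ⟨k-1, by omega⟩
    rw [hs]; exact hv j (by omega)
  rw [finsum_eq_range hv, finsum_eq_range hv', Finset.sum_range_succ', h0, add_zero]
  exact Finset.sum_congr rfl fun k _ => hs k

lemma an_sum (s : ℕ) {ι : Type*} (t : Finset ι) (g : ι → MP) :
    An s (∑ i ∈ t, g i) = ∑ i ∈ t, An s (g i) :=
  map_sum (AnL s) g t

lemma Ca {s : ℕ} (hs : 1 ≤ s) (P : MP) :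
    An s (An 0 P) - An 0 (An s P) = (s:ℝ) • An (s-1) P := by
  obtain ⟨N, hP⟩ := bnd_exists P
  set M := N + 2 with hM
  have hF : Bnd (N+1) (An 0 P) := bnd_an hP 0
  have e1 : An s (An 0 P) = ∑ k ∈ Finset.range M,
      ((k:ℝ) • (X k * An 0 (pderiv (k+s-1) P))
        + ((k:ℝ) * ((k+s-1:ℕ):ℝ)) • (X k * pderiv (k+s-2) P)) := by
    rw [an_eq_range hF s (M := M) (by omega)]
    refine Finset.sum_congr rfl fun k _ => ?_
    rw [pd_F, show k+s-1-1 = k+s-2 from by omega, mul_add, smul_add, mul_smul_comm, smul_smul]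
  have e2 : An 0 (An s P) = ∑ k ∈ Finset.range M,
      (((k:ℝ) * ((k:ℝ)+1)) • (X (k+1) * pderiv (k+s-1) P)
        + (k:ℝ) • (X k * An 0 (pderiv (k+s-1) P))) := by
    rw [an_eq_range hP s (M := M) (by omega), an_sum]
    refine Finset.sum_congr rfl fun k _ => ?_
    rw [an_smul, F_X_mul, smul_add, smul_smul]
  set w : ℕ → MP := fun k => (((k:ℝ)-1) * (k:ℝ)) • (X k * pderiv (k+s-2) P) with hwdef
  have e3 : ∑ k ∈ Finset.range M, ((k:ℝ) * ((k:ℝ)+1)) • (X (k+1) * pderiv (k+s-1) P)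
      = ∑ k ∈ Finset.range M, w k := by
    have hw : ∀ k : ℕ, w (k+1) = ((k:ℝ) * ((k:ℝ)+1)) • (X (k+1) * pderiv (k+s-1) P) := by
      intro k
      show ((((k+1:ℕ):ℝ)-1) * ((k+1:ℕ):ℝ)) • (X (k+1) * pderiv ((k+1)+s-2) P) = _
      rw [show (k+1)+s-2 = k+s-1 from by omega]
      congr 1
      push_cast
      ring
    have h1 : ∑ k ∈ Finset.range (M+1), w k
        = (∑ k ∈ Finset.range M, w (k+1)) + w 0 := Finset.sum_range_succ' w M
    have h2 : ∑ k ∈ Finset.range (M+1), w k = (∑ k ∈ Finset.range M, w k) + w M :=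
      Finset.sum_range_succ w M
    have hw0 : w 0 = 0 := by
      show ((((0:ℕ):ℝ)-1) * ((0:ℕ):ℝ)) • (X 0 * pderiv (0+s-2) P) = (0:MP)
      norm_num
    have hwM : w M = 0 := by
      show ((((M:ℕ):ℝ)-1) * ((M:ℕ):ℝ)) • (X M * pderiv (M+s-2) P) = 0
      rw [hP (M+s-2) (by omega), mul_zero, smul_zero]
    calc ∑ k ∈ Finset.range M, ((k:ℝ) * ((k:ℝ)+1)) • (X (k+1) * pderiv (k+s-1) P)
        = ∑ k ∈ Finset.range M, w (k+1) := Finset.sum_congr rfl fun k _ => (hw k).symm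
      _ = ∑ k ∈ Finset.range M, w k := by
          have h3 := h1.symm.trans h2
          rw [hw0, add_zero] at h3
          rw [h3, hwM, add_zero]
  rw [e1, e2, Finset.sum_add_distrib, Finset.sum_add_distrib, e3]
  have e4 : ∀ k ∈ Finset.range M, ((k:ℝ) * ((k+s-1:ℕ):ℝ)) • (X k * pderiv (k+s-2) P) - w k
      = (s:ℝ) • ((k:ℝ) • (X k * pderiv (k + (s-1) - 1) P)) := by
    intro k _
    show _ - (((k:ℝ)-1) * (k:ℝ)) • (X k * pderiv (k+s-2) P) = _
    rw [show k + (s-1) - 1 = k+s-2 from by omega, smul_smul, ← sub_smul]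
    congr 1
    rw [Nat.cast_sub (by omega : 1 ≤ k + s)]
    push_cast
    ring
  rw [show ∀ a b c : MP, a + b - (c + a) = b - c from fun a b c => by ring,
    ← Finset.sum_sub_distrib,
    Finset.sum_congr rfl e4, ← Finset.smul_sum, an_eq_range hP (s-1) (M := M) (by omega)]

lemma Cb {m : ℕ} (hm : 1 ≤ m) (P : MP) :
    (∑ a ∈ Finset.range (m+1), pderiv a (pderiv (m-a) (An 0 P)))
      - An 0 (∑ a ∈ Finset.range (m+1), pderiv a (pderiv (m-a) P))
    = ((m:ℝ)+1) • ∑ a ∈ Finset.range m, pderiv a (pderiv (m-1-a) P) := by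
  have e1 : ∀ a, pderiv a (pderiv (m-a) (An 0 P))
      = An 0 (pderiv a (pderiv (m-a) P)) + (a:ℝ) • pderiv (a-1) (pderiv (m-a) P)
        + ((m-a:ℕ):ℝ) • pderiv a (pderiv (m-a-1) P) := by
    intro a
    rw [pd_F (m-a) P, map_add, (pderiv a).map_smul, pd_F a (pderiv (m-a) P)]
  rw [Finset.sum_congr rfl (fun a _ => e1 a), an_sum, Finset.sum_add_distrib,
    Finset.sum_add_distrib]
  rw [show ∀ a b c : MP, a + b + c - a = b + c from fun a b c => by ring]
  have e2 : ∑ a ∈ Finset.range (m+1), (a:ℝ) • pderiv (a-1) (pderiv (m-a) P)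
      = ∑ a ∈ Finset.range m, ((a:ℝ)+1) • pderiv a (pderiv (m-1-a) P) := by
    rw [Finset.sum_range_succ' (fun a => (a:ℝ) • pderiv (a-1) (pderiv (m-a) P)) m]
    norm_num
    refine Finset.sum_congr rfl fun a _ => ?_
    rw [show m-(a+1) = m-1-a from by omega]
  have e3 : ∑ a ∈ Finset.range (m+1), ((m-a:ℕ):ℝ) • pderiv a (pderiv (m-a-1) P)
      = ∑ a ∈ Finset.range m, ((m:ℝ)-(a:ℝ)) • pderiv a (pderiv (m-1-a) P) := by
    rw [Finset.sum_range_succ]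
    norm_num
    refine Finset.sum_congr rfl fun a ha => ?_
    rw [show m-a-1 = m-1-a from by omega,
      Nat.cast_sub (by have := Finset.mem_range.mp ha; omega : a ≤ m)]
  rw [e2, e3, ← Finset.sum_add_distrib, Finset.smul_sum]
  refine Finset.sum_congr rfl fun a _ => ?_
  rw [← add_smul]
  congr 1
  ring

lemma Cc (m : ℕ) (P : MP) :
    pderiv m (An 0 P) - An 0 (pderiv m P) = (m:ℝ) • pderiv (m-1) P := by
  rw [pd_F]; ring

lemma commL (β : ℝ) {m : ℕ} (hm : 1 ≤ m) (P : MP) :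
    Lbeta β m (An 0 P) - An 0 (Lbeta β m P) = ((m:ℝ)+1) • Lbeta β ((m:ℤ)-1) P := by
  rw [Lbeta_nat β m (An 0 P), Lbeta_nat β m P, Lbeta_sub_one β hm P,
    an_add, an_add, an_smul, an_smul]
  have hCa := Ca (s := m+1) (by omega) P
  rw [show m+1-1 = m from by omega] at hCa
  have hCb := Cb hm P
  have hCc := Cc m P
  have expand : ∀ A1 A2 B1 B2 C1 C2 : MP,
      A1 + β • B1 + ((1-β)*((m:ℝ)+1)) • C1 - (A2 + β • B2 + ((1-β)*((m:ℝ)+1)) • C2)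
      = (A1 - A2) + β • (B1 - B2) + ((1-β)*((m:ℝ)+1)) • (C1 - C2) := by
    intro A1 A2 B1 B2 C1 C2
    module
  rw [expand, hCa, hCb, hCc]
  push_cast
  module

/-- `[½𝒲̂_0, 𝓕̂_1] = ∑_{k≥1} k t_k 𝓛̂_{k-1}` where `𝓕̂_1 = 𝓛̂_{-1}`. -/
theorem beta_F2_eq (β : ℝ) (P : MvPolynomial ℕ ℝ) :
    (1 / 2 : ℝ) • (Wbeta0 β (Lbeta β (-1) P) - Lbeta β (-1) (Wbeta0 β P)) =
      ∑ᶠ k : ℕ, if 1 ≤ k then (k : ℝ) • (X k * Lbeta β ((k : ℤ) - 1) P) else 0 := by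
  obtain ⟨N, hP⟩ := bnd_exists P
  have hFP : Bnd (N+1) (An 0 P) := bnd_an hP 0
  set M := 2*N + 2 with hMdef
  have Lcast : ∀ k : ℕ, 1 ≤ k → Lbeta β ((k:ℤ)-1) P = Lbeta β ((k-1:ℕ):ℤ) P := by
    intro k hk
    congr 1
    omega
  have hLz : ∀ k : ℕ, 2*N ≤ k → Lbeta β (k:ℤ) P = 0 := fun k hk => Lbeta_zero hP hk β
  have hLz' : ∀ k : ℕ, M ≤ k → (k:ℝ) • (X k * Lbeta β ((k:ℤ)-1) P) = 0 := by
    intro k hk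
    rw [Lcast k (by omega), Lbeta_zero hP (by omega) β, mul_zero, smul_zero]
  -- drop the `ite`s
  have wb_eq : ∀ Q : MP, Wbeta0 β Q = ∑ᶠ k : ℕ, (k:ℝ) • (X k * Lbeta β k Q) := by
    intro Q
    rw [Wbeta0]
    apply finsum_congr
    intro k
    rcases Nat.eq_zero_or_pos k with rfl | hk
    · simp
    · rw [if_pos (by omega : 1 ≤ k)]
  have rhs_eq : (∑ᶠ k : ℕ, if 1 ≤ k then (k : ℝ) • (X k * Lbeta β ((k : ℤ) - 1) P) else 0)
      = ∑ k ∈ Finset.range M, (k:ℝ) • (X k * Lbeta β ((k:ℤ)-1) P) := by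
    have hpt : ∀ k : ℕ, (if 1 ≤ k then (k : ℝ) • (X k * Lbeta β ((k : ℤ) - 1) P) else 0)
        = (k:ℝ) • (X k * Lbeta β ((k:ℤ)-1) P) := by
      intro k
      rcases Nat.eq_zero_or_pos k with rfl | hk
      · simp
      · rw [if_pos (by omega : 1 ≤ k)]
    rw [finsum_congr hpt, finsum_eq_range hLz']
  have e1 : Wbeta0 β (An 0 P) = ∑ k ∈ Finset.range M,
      (k:ℝ) • (X k * Lbeta β k (An 0 P)) := by
    rw [wb_eq]
    exact finsum_eq_range (fun k hk => by
      rw [Lbeta_zero hFP (by omega) β, mul_zero, smul_zero])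
  have e2 : An 0 (Wbeta0 β P) = ∑ k ∈ Finset.range M,
      (((k:ℝ) * ((k:ℝ)+1)) • (X (k+1) * Lbeta β k P)
        + (k:ℝ) • (X k * An 0 (Lbeta β k P))) := by
    rw [wb_eq, finsum_eq_range (N := M) (fun k hk => by
      rw [hLz k (by omega), mul_zero, smul_zero]), an_sum]
    refine Finset.sum_congr rfl fun k _ => ?_
    rw [an_smul, F_X_mul, smul_add, smul_smul]
  rw [Lbeta_neg_one, Lbeta_neg_one, e1, e2, rhs_eq]
  have key : ∀ k ∈ Finset.range M, (k:ℝ) • (X k * Lbeta β k (An 0 P))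
      - (((k:ℝ) * ((k:ℝ)+1)) • (X (k+1) * Lbeta β k P)
        + (k:ℝ) • (X k * An 0 (Lbeta β k P)))
      = ((k:ℝ) * ((k:ℝ)+1)) • (X k * Lbeta β ((k:ℤ)-1) P)
        - ((k:ℝ) * ((k:ℝ)+1)) • (X (k+1) * Lbeta β k P) := by
    intro k _
    rcases Nat.eq_zero_or_pos k with rfl | hk
    · norm_num
    · have hc := commL β hk P
      rw [show ∀ a b c : MP, a - (b + c) = (a - c) - b from fun a b c => by ring,
        ← smul_sub, ← mul_sub, hc, mul_smul_comm, smul_smul]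
  rw [← Finset.sum_sub_distrib, Finset.sum_congr rfl key, Finset.sum_sub_distrib]
  set w : ℕ → MP := fun k => (((k:ℝ)-1) * (k:ℝ)) • (X k * Lbeta β ((k:ℤ)-1) P) with hwdef
  have e3 : ∑ k ∈ Finset.range M, ((k:ℝ) * ((k:ℝ)+1)) • (X (k+1) * Lbeta β k P)
      = ∑ k ∈ Finset.range M, w k := by
    have hw : ∀ k : ℕ, w (k+1) = ((k:ℝ) * ((k:ℝ)+1)) • (X (k+1) * Lbeta β k P) := by
      intro k
      show ((((k+1:ℕ):ℝ)-1) * ((k+1:ℕ):ℝ)) • (X (k+1) * Lbeta β (((k+1:ℕ):ℤ)-1) P) = _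
      rw [show ((k+1:ℕ):ℤ)-1 = (k:ℤ) from by push_cast; ring]
      congr 1
      push_cast
      ring
    have h1 := Finset.sum_range_succ' w M
    have h2 := Finset.sum_range_succ w M
    have hw0 : w 0 = 0 := by
      show ((((0:ℕ):ℝ)-1) * ((0:ℕ):ℝ)) • (X 0 * Lbeta β (((0:ℕ):ℤ)-1) P) = 0
      norm_num
    have hwM : w M = 0 := by
      show (((M:ℝ)-1) * (M:ℝ)) • (X M * Lbeta β ((M:ℤ)-1) P) = 0
      rw [Lcast M (by omega), Lbeta_zero hP (by omega : 2*N ≤ M - 1) β, mul_zero, smul_zero]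
    calc ∑ k ∈ Finset.range M, ((k:ℝ) * ((k:ℝ)+1)) • (X (k+1) * Lbeta β k P)
        = ∑ k ∈ Finset.range M, w (k+1) := Finset.sum_congr rfl fun k _ => (hw k).symm
      _ = ∑ k ∈ Finset.range M, w k := by
          have h3 := h1.symm.trans h2
          rw [hw0, add_zero] at h3
          rw [h3, hwM, add_zero]
  rw [e3, ← Finset.sum_sub_distrib, Finset.smul_sum]
  refine Finset.sum_congr rfl fun k _ => ?_
  show (1/2:ℝ) • (((k:ℝ) * ((k:ℝ)+1)) • (X k * Lbeta β ((k:ℤ)-1) P)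
      - (((k:ℝ)-1) * (k:ℝ)) • (X k * Lbeta β ((k:ℤ)-1) P)) = _
  rw [← sub_smul, smul_smul]
  congr 1
  ring
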